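/- arXiv:2006.14606 — 2 statements merged into one kernel-verified Lean document; each statement's English description precedes it below -/
import Mathlib

section
/- Let $A \in \mathbb{R}^{n \times D}$, $B \in \mathbb{R}^{m \times D}$ with $m \le D$, suppose $BB^\top$ is invertible, and let $\lambda, \tau > 0$. Then $A - \frac{1}{l} A B^\top \left( \frac{1}{l} BB^\top \right)^{-1} \left( I - e^{-\lambda \frac{1}{l} BB^\top \tau} \right) B = A \, e^{-\lambda \frac{1}{l} B^\top B \tau}$ for any $l > 0$. -/
open Matrix

/-- Frobenius norm of a real matrix. -/
noncomputable def frobNorm {m n : ℕ} (A : Matrix (Fin m) (Fin n) ℝ) : ℝ :=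
  Real.sqrt (∑ i, ∑ j, (A i j)^2)

/-- Operator (spectral) norm of a real matrix, i.e. the `ℓ²→ℓ²` operator norm. -/
noncomputable def opNorm {m n : ℕ} (A : Matrix (Fin m) (Fin n) ℝ) : ℝ :=
  ‖LinearMap.toContinuousLinearMap (Matrix.toEuclideanLin A)‖

section Aux

attribute [local instance] Matrix.linftyOpNormedRing Matrix.linftyOpNormedAlgebra

open NormedSpace in
lemma aux_mul_exp {p q : ℕ} (C : Matrix (Fin p) (Fin q) ℝ)
    (M : Matrix (Fin q) (Fin q) ℝ) (N : Matrix (Fin p) (Fin p) ℝ)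
    (h : C * M = N * C) : C * exp M = exp N * C := by
  have hpow : ∀ k : ℕ, C * M ^ k = N ^ k * C := by
    intro k
    induction k with
    | zero => simp
    | succ k ih => rw [pow_succ, ← Matrix.mul_assoc, ih, Matrix.mul_assoc, h, ← Matrix.mul_assoc, pow_succ]
  let L : Matrix (Fin q) (Fin q) ℝ →ₗ[ℝ] Matrix (Fin p) (Fin q) ℝ :=
    { toFun := fun X => C * X
      map_add' := fun X Y => Matrix.mul_add C X Y
      map_smul' := fun r X => Matrix.mul_smul C r X }
  let R : Matrix (Fin p) (Fin p) ℝ →ₗ[ℝ] Matrix (Fin p) (Fin q) ℝ :=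
    { toFun := fun X => X * C
      map_add' := fun X Y => Matrix.add_mul X Y C
      map_smul' := fun r X => Matrix.smul_mul r X C }
  have hL := (LinearMap.toContinuousLinearMap L).map_tsum
    (NormedSpace.expSeries_summable' (𝕂 := ℝ) M)
  have hR := (LinearMap.toContinuousLinearMap R).map_tsum
    (NormedSpace.expSeries_summable' (𝕂 := ℝ) N)
  simp only [LinearMap.coe_toContinuousLinearMap', LinearMap.coe_mk, AddHom.coe_mk, L, R] at hL hR
  rw [exp_eq_tsum ℝ, exp_eq_tsum ℝ, hL, hR]
  congr 1
  funext k
  rw [Matrix.mul_smul, Matrix.smul_mul, hpow]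

open NormedSpace in
lemma aux_ann_exp {q : ℕ} {p : ℕ} (Q : Matrix (Fin p) (Fin q) ℝ)
    (M : Matrix (Fin q) (Fin q) ℝ) (h : Q * M = 0) : Q * exp M = Q := by
  have hpow : ∀ k : ℕ, Q * M ^ (k + 1) = 0 := by
    intro k
    induction k with
    | zero => simpa using h
    | succ k ih => rw [pow_succ, ← Matrix.mul_assoc, ih, Matrix.zero_mul]
  let L : Matrix (Fin q) (Fin q) ℝ →ₗ[ℝ] Matrix (Fin p) (Fin q) ℝ :=
    { toFun := fun X => Q * X
      map_add' := fun X Y => Matrix.mul_add Q X Y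
      map_smul' := fun r X => Matrix.mul_smul Q r X }
  have hL := (LinearMap.toContinuousLinearMap L).map_tsum
    (NormedSpace.expSeries_summable' (𝕂 := ℝ) M)
  simp only [LinearMap.coe_toContinuousLinearMap', LinearMap.coe_mk, AddHom.coe_mk, L] at hL
  rw [exp_eq_tsum ℝ, hL]
  rw [tsum_eq_single 0]
  · simp
  · intro k hk
    obtain ⟨k, rfl⟩ := Nat.exists_eq_succ_of_ne_zero hk
    rw [Matrix.mul_smul, hpow, smul_zero]

end Aux

theorem stmt6 {n m D : ℕ} (hmD : m ≤ D)
    (A : Matrix (Fin n) (Fin D) ℝ) (B : Matrix (Fin m) (Fin D) ℝ)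
    (hinv : IsUnit (B * Bᵀ)) (lam τ l : ℝ)
    (hlam : 0 < lam) (hτ : 0 < τ) (hl : 0 < l) :
    A - ((1/l) • (A * Bᵀ)) * ((1/l : ℝ) • (B * Bᵀ))⁻¹ *
        (1 - NormedSpace.exp ((-(lam * τ)) • ((1/l : ℝ) • (B * Bᵀ)))) * B
      = A * NormedSpace.exp ((-(lam * τ)) • ((1/l : ℝ) • (Bᵀ * B))) := by
  set c : ℝ := -(lam * τ) * (1/l) with hc
  have hdet : IsUnit (B * Bᵀ).det := (Matrix.isUnit_iff_isUnit_det _).mp hinv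
  have hMinv : (B * Bᵀ)⁻¹ * (B * Bᵀ) = 1 := Matrix.nonsing_inv_mul _ hdet
  have hl0 : (1/l : ℝ) ≠ 0 := by positivity
  -- rewrite scalar exp arguments
  have harg1 : (-(lam * τ)) • ((1/l : ℝ) • (B * Bᵀ)) = c • (B * Bᵀ) := by
    rw [smul_smul]
  have harg2 : (-(lam * τ)) • ((1/l : ℝ) • (Bᵀ * B)) = c • (Bᵀ * B) := by
    rw [smul_smul]
  rw [harg1, harg2]
  set EM := NormedSpace.exp (c • (B * Bᵀ)) with hEM
  set EN := NormedSpace.exp (c • (Bᵀ * B)) with hEN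
  -- intertwining
  have hint : B * EN = EM * B := by
    apply aux_mul_exp
    rw [Matrix.mul_smul, Matrix.smul_mul, Matrix.mul_assoc]
  -- the scaled inverse collapses
  haveI : Invertible (1/l : ℝ) := invertibleOfNonzero hl0
  have hsmulinv : ((1/l : ℝ) • (B * Bᵀ))⁻¹ = (l : ℝ) • (B * Bᵀ)⁻¹ := by
    rw [Matrix.inv_smul (A := B * Bᵀ) (1/l) hdet]
    congr 1
    rw [invOf_eq_inv, one_div, inv_inv]
  have hcoef : ((1/l : ℝ) • (A * Bᵀ)) * ((1/l : ℝ) • (B * Bᵀ))⁻¹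
      = A * Bᵀ * (B * Bᵀ)⁻¹ := by
    rw [hsmulinv, Matrix.smul_mul, Matrix.mul_smul, smul_smul]
    rw [one_div, inv_mul_cancel₀ (ne_of_gt hl), one_smul]
  rw [hcoef]
  have h0 : (1 - Bᵀ * (B * Bᵀ)⁻¹ * B) * (Bᵀ * B) = 0 := by
    have h1 : Bᵀ * (B * Bᵀ)⁻¹ * B * (Bᵀ * B) = Bᵀ * B := by
      rw [Matrix.mul_assoc (Bᵀ * (B * Bᵀ)⁻¹) B (Bᵀ * B), ← Matrix.mul_assoc B Bᵀ B,
        ← Matrix.mul_assoc (Bᵀ * (B * Bᵀ)⁻¹) (B * Bᵀ) B,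
        Matrix.mul_assoc Bᵀ ((B * Bᵀ)⁻¹) (B * Bᵀ), hMinv, Matrix.mul_one]
    rw [Matrix.sub_mul, Matrix.one_mul, h1, sub_self]
  have hQ : (1 - Bᵀ * (B * Bᵀ)⁻¹ * B) * EN = (1 - Bᵀ * (B * Bᵀ)⁻¹ * B) := by
    apply aux_ann_exp
    rw [Matrix.mul_smul, h0, smul_zero]
  have hPQ : A * EN = A * ((1 - Bᵀ * (B * Bᵀ)⁻¹ * B) + Bᵀ * (B * Bᵀ)⁻¹ * B) * EN := by
    rw [sub_add_cancel, Matrix.mul_one]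
  rw [hPQ, Matrix.mul_add, Matrix.add_mul, Matrix.mul_assoc A (1 - Bᵀ * (B * Bᵀ)⁻¹ * B) EN, hQ]
  simp only [Matrix.mul_sub, Matrix.sub_mul, Matrix.mul_one, Matrix.one_mul, Matrix.mul_assoc,
    hint]
  abel
end

section
/- Let $A, B \in \mathbb{R}^{m \times m}$ be symmetric positive semi-definite matrices and $s > 0$. Then $\|e^{-sA} - e^{-sB}\|_{op} \le s \, \|A - B\|_{op} \, e^{-s \min(\lambda_{\min}(A), \lambda_{\min}(B))}$; in particular $\|e^{-sA} - e^{-sB}\|_{op} \le s \|A - B\|_{op}$. -/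
open Matrix

section helpers
open scoped Matrix.Norms.L2Operator
variable {m : ℕ}

lemma diag_norm_le (v : Fin m → ℝ) (c : ℝ) (hc : 0 ≤ c) (h : ∀ i, |v i| ≤ c) :
    ‖(Matrix.diagonal v : Matrix (Fin m) (Fin m) ℝ)‖ ≤ c := by
  rw [Matrix.l2_opNorm_def]
  apply ContinuousLinearMap.opNorm_le_bound _ hc
  intro x
  show ‖Matrix.toEuclideanLin (Matrix.diagonal v) x‖ ≤ c * ‖x‖
  rw [Matrix.toEuclideanLin_apply]
  rw [EuclideanSpace.norm_eq, EuclideanSpace.norm_eq]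
  simp only [Matrix.mulVec_diagonal, Real.norm_eq_abs]
  rw [← Real.sqrt_sq hc, ← Real.sqrt_mul (by positivity)]
  apply Real.sqrt_le_sqrt
  rw [Finset.mul_sum]
  apply Finset.sum_le_sum
  intro i _
  have h2 : |v i * x i| ≤ c * |x i| := by
    rw [abs_mul]
    exact mul_le_mul_of_nonneg_right (h i) (abs_nonneg _)
  calc |v i * x i| ^ 2 ≤ (c * |x i|) ^ 2 := by
        exact pow_le_pow_left₀ (abs_nonneg _) h2 2
    _ = c ^ 2 * |x i| ^ 2 := by ring

lemma norm_exp_le (A : Matrix (Fin m) (Fin m) ℝ) (hA : A.IsHermitian)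
    (t c : ℝ) (ht : 0 ≤ t) (hc : ∀ i, c ≤ hA.eigenvalues i) :
    ‖NormedSpace.exp ((-t) • A)‖ ≤ Real.exp (-(t * c)) := by
  set U : Matrix (Fin m) (Fin m) ℝ := (hA.eigenvectorUnitary : Matrix (Fin m) (Fin m) ℝ) with hUdef
  have hU : U ∈ unitary (Matrix (Fin m) (Fin m) ℝ) := hA.eigenvectorUnitary.2
  have hUunit : IsUnit U := ⟨Unitary.toUnits ⟨U, hU⟩, rfl⟩
  have hUinv : U⁻¹ = star U :=
    Matrix.inv_eq_left_inv (by simpa using Unitary.coe_star_mul_self (⟨U, hU⟩ : unitary _))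
  have key : (-t) • A = U * Matrix.diagonal (fun i => -t * hA.eigenvalues i) * U⁻¹ := by
    rw [hUinv]
    conv_lhs => rw [hA.spectral_theorem]
    rw [Unitary.conjStarAlgAut_apply]
    rw [RCLike.ofReal_real_eq_id]
    rw [← smul_mul_assoc, ← mul_smul_comm]
    congr 2
    ext i j
    by_cases hij : i = j <;> simp [hij, Matrix.diagonal, mul_comm]
  rw [key, Matrix.exp_conj U _ hUunit, Matrix.exp_diagonal, hUinv]
  have hd : ‖(U * Matrix.diagonal (NormedSpace.exp fun i => -t * hA.eigenvalues i) * star U)‖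
      = ‖Matrix.diagonal (NormedSpace.exp fun i => -t * hA.eigenvalues i)‖ := by
    rw [mul_assoc]
    rw [CStarRing.norm_coe_unitary_mul (⟨U, hU⟩ : unitary (Matrix (Fin m) (Fin m) ℝ))]
    have := CStarRing.norm_mul_coe_unitary
      (Matrix.diagonal (NormedSpace.exp fun i => -t * hA.eigenvalues i))
      (star (⟨U, hU⟩ : unitary (Matrix (Fin m) (Fin m) ℝ)))
    simpa using this
  rw [hd]
  have hfun : (NormedSpace.exp fun i : Fin m => -t * hA.eigenvalues i)
      = fun i : Fin m => Real.exp (-t * hA.eigenvalues i) := by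
    rw [Pi.exp_def, ← Real.exp_eq_exp_ℝ]
  rw [hfun]
  apply diag_norm_le _ _ (Real.exp_pos _).le
  intro i
  rw [abs_of_pos (Real.exp_pos _)]
  apply Real.exp_le_exp.mpr
  have := hc i
  nlinarith


lemma duhamel (X Y : Matrix (Fin m) (Fin m) ℝ) (s : ℝ) :
    NormedSpace.exp (s • X) - NormedSpace.exp (s • Y) =
      ∫ t in (0:ℝ)..s,
        NormedSpace.exp (t • X) * (X - Y) * NormedSpace.exp ((s - t) • Y) := by
  have hderiv : ∀ t : ℝ, HasDerivAt
      (fun u : ℝ => NormedSpace.exp (u • X) * NormedSpace.exp ((s - u) • Y))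
      (NormedSpace.exp (t • X) * (X - Y) * NormedSpace.exp ((s - t) • Y)) t := by
    intro t
    have h1 : HasDerivAt (fun u : ℝ => NormedSpace.exp (u • X))
        (NormedSpace.exp (t • X) * X) t := hasDerivAt_exp_smul_const X t
    have hst : HasDerivAt (fun u : ℝ => s - u) (-1) t := (hasDerivAt_id t).const_sub s
    have h2base : HasDerivAt (fun u : ℝ => NormedSpace.exp (u • Y))
        (Y * NormedSpace.exp ((s - t) • Y)) (s - t) := hasDerivAt_exp_smul_const' Y (s - t)
    have h2 : HasDerivAt (fun u : ℝ => NormedSpace.exp ((s - u) • Y))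
        ((-1 : ℝ) • (Y * NormedSpace.exp ((s - t) • Y))) t := h2base.scomp t hst
    have := h1.mul h2
    refine this.congr_deriv ?_
    symm
    have hcomm : NormedSpace.exp ((s - t) • Y) * Y = Y * NormedSpace.exp ((s - t) • Y) :=
      (((Commute.refl Y).smul_left (s - t)).exp_left).eq
    simp only [neg_one_smul, mul_neg, sub_mul, mul_sub]
    rw [← sub_eq_add_neg, mul_assoc, mul_assoc]
  have hcont : Continuous (fun t : ℝ =>
      NormedSpace.exp (t • X) * (X - Y) * NormedSpace.exp ((s - t) • Y)) := by
    letI : NormedAlgebra ℚ (Matrix (Fin m) (Fin m) ℝ) := .restrictScalars ℚ ℝ _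
    apply Continuous.mul
    · exact (NormedSpace.exp_continuous.comp (continuous_id.smul continuous_const)).mul
        continuous_const
    · exact NormedSpace.exp_continuous.comp ((continuous_const.sub continuous_id).smul
        continuous_const)
  have := intervalIntegral.integral_eq_sub_of_hasDerivAt (fun t _ => hderiv t)
    (hcont.intervalIntegrable 0 s)
  rw [this]
  simp [NormedSpace.exp_zero]

lemma main_bound (A B : Matrix (Fin m) (Fin m) ℝ)
    (hA : A.PosSemidef) (hB : B.PosSemidef) (s : ℝ) (hs : 0 < s) :
    ‖NormedSpace.exp ((-s) • A) - NormedSpace.exp ((-s) • B)‖ ≤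
      s * ‖A - B‖ *
        Real.exp (-s * min (⨅ i, hA.1.eigenvalues i) (⨅ i, hB.1.eigenvalues i)) := by
  set c := min (⨅ i, hA.1.eigenvalues i) (⨅ i, hB.1.eigenvalues i) with hcdef
  have hcA : ∀ i, c ≤ hA.1.eigenvalues i := fun i =>
    (min_le_left _ _).trans (ciInf_le (Set.Finite.bddBelow (Set.finite_range _)) i)
  have hcB : ∀ i, c ≤ hB.1.eigenvalues i := fun i =>
    (min_le_right _ _).trans (ciInf_le (Set.Finite.bddBelow (Set.finite_range _)) i)
  have hXA : (-s) • A = s • (-A) := by rw [neg_smul, smul_neg]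
  have hXB : (-s) • B = s • (-B) := by rw [neg_smul, smul_neg]
  rw [hXA, hXB, duhamel (-A) (-B) s]
  have hbound : ∀ t ∈ Set.uIoc (0:ℝ) s,
      ‖NormedSpace.exp (t • (-A)) * ((-A) - (-B)) * NormedSpace.exp ((s - t) • (-B))‖ ≤
        ‖A - B‖ * Real.exp (-(s * c)) := by
    intro t htm
    rw [Set.uIoc_of_le hs.le] at htm
    obtain ⟨ht0, hts⟩ := htm
    have e1 : t • (-A) = (-t) • A := by rw [neg_smul, smul_neg]
    have e2 : (s - t) • (-B) = (-(s - t)) • B := by rw [neg_smul, smul_neg]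
    have n1 := norm_exp_le A hA.1 t c ht0.le hcA
    have n2 := norm_exp_le B hB.1 (s - t) c (by linarith) hcB
    rw [e1, e2]
    refine (norm_mul_le _ _).trans ?_
    refine le_trans (mul_le_mul_of_nonneg_right (norm_mul_le _ _) (norm_nonneg _)) ?_
    rw [neg_sub_neg, norm_sub_rev]
    calc ‖NormedSpace.exp ((-t) • A)‖ * ‖A - B‖ * ‖NormedSpace.exp ((-(s - t)) • B)‖
        ≤ Real.exp (-(t * c)) * ‖A - B‖ * Real.exp (-((s - t) * c)) := by
          gcongr
      _ = ‖A - B‖ * Real.exp (-(s * c)) := by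
          rw [mul_comm (Real.exp (-(t * c))) ‖A - B‖, mul_assoc, ← Real.exp_add]
          congr 1
          ring
  have hkey := intervalIntegral.norm_integral_le_of_norm_le_const hbound
  rw [sub_zero, abs_of_pos hs] at hkey
  calc ‖∫ t in (0:ℝ)..s, NormedSpace.exp (t • (-A)) * ((-A) - (-B)) *
          NormedSpace.exp ((s - t) • (-B))‖
      ≤ ‖A - B‖ * Real.exp (-(s * c)) * s := hkey
    _ = s * ‖A - B‖ * Real.exp (-s * c) := by rw [neg_mul]; ring

lemma main_bound2 (A B : Matrix (Fin m) (Fin m) ℝ)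
    (hA : A.PosSemidef) (hB : B.PosSemidef) (s : ℝ) (hs : 0 < s) :
    ‖NormedSpace.exp ((-s) • A) - NormedSpace.exp ((-s) • B)‖ ≤ s * ‖A - B‖ := by
  refine (main_bound A B hA hB s hs).trans ?_
  have hc : 0 ≤ min (⨅ i, hA.1.eigenvalues i) (⨅ i, hB.1.eigenvalues i) :=
    le_min (Real.iInf_nonneg fun i => hA.eigenvalues_nonneg i)
      (Real.iInf_nonneg fun i => hB.eigenvalues_nonneg i)
  have hexp : Real.exp (-s * min (⨅ i, hA.1.eigenvalues i) (⨅ i, hB.1.eigenvalues i)) ≤ 1 := by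
    rw [Real.exp_le_one_iff]
    nlinarith
  calc s * ‖A - B‖ * Real.exp (-s * min (⨅ i, hA.1.eigenvalues i) (⨅ i, hB.1.eigenvalues i))
      ≤ s * ‖A - B‖ * 1 := by
        apply mul_le_mul_of_nonneg_left hexp (by positivity)
    _ = s * ‖A - B‖ := mul_one _

end helpers

theorem stmt9 {m : ℕ} (A B : Matrix (Fin m) (Fin m) ℝ)
    (hA : A.PosSemidef) (hB : B.PosSemidef) (s : ℝ) (hs : 0 < s) :
    opNorm (NormedSpace.exp ((-s) • A) - NormedSpace.exp ((-s) • B)) ≤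
      s * opNorm (A - B) *
        Real.exp (-s * min (⨅ i, hA.1.eigenvalues i) (⨅ i, hB.1.eigenvalues i)) ∧
    opNorm (NormedSpace.exp ((-s) • A) - NormedSpace.exp ((-s) • B)) ≤
      s * opNorm (A - B) := by
  exact ⟨main_bound A B hA hB s hs, main_bound2 A B hA hB s hs⟩
end
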